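/- arXiv:1909.13188 — 2 statements merged into one kernel-verified Lean document; each statement's English description precedes it below -/
import Mathlib

section
/- For the Dirac LSGAN with discriminator D(x) = φx + 1/2, the Jacobian at the equilibrium (φ, θ) = (0, c) with c = 1 equals [[−4, −1], [1, 0]], and both of its eigenvalues are real and strictly negative (−2 ± √3), so the linearized dynamics is asymptotically stable. -/
/-- A complex number `μ` is an eigenvalue of a square complex matrix `M`. -/
def Matrix.HasEigval {n : ℕ} (M : Matrix (Fin n) (Fin n) ℂ) (μ : ℂ) : Prop :=
  ∃ v : Fin n → ℂ, v ≠ 0 ∧ M.mulVec v = μ • v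

/-- Dirac LSGAN dynamics (with `D(x) = φx + 1/2`, i.e. `h₁(x) = -(x-1/2)²`,
`h₂(x) = -(x+1/2)²`, `h₃(x) = -(x-1/2)²` and data point `c = 1`):
the discriminator update `f₁(φ,θ) = h₁'(φ·1)·1 + h₂'(φθ)·θ`. -/
noncomputable def lsganF1 (φ θ : ℝ) : ℝ := -2 * (φ * 1 - 1/2) * 1 + -2 * (φ * θ + 1/2) * θ

/-- Dirac LSGAN generator update `f₂(φ,θ) = h₃'(φθ)·φ`. -/
noncomputable def lsganF2 (φ θ : ℝ) : ℝ := -2 * (φ * θ - 1/2) * φ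

lemma eig_of_root (μ : ℂ) (h : μ ^ 2 + 4 * μ + 1 = 0) :
    (!![(-4 : ℂ), -1; 1, 0]).HasEigval μ := by
  refine ⟨![μ, 1], ?_, ?_⟩
  · intro hv
    have := congrFun hv 1
    simp at this
  · funext i
    fin_cases i
    · simp [Matrix.mulVec, dotProduct, Fin.sum_univ_two]
      linear_combination -h
    · simp [Matrix.mulVec, dotProduct, Fin.sum_univ_two]

/-- For the Dirac LSGAN with `D(x) = φx + 1/2`, the Jacobian of the dynamics at
the equilibrium `(φ, θ) = (0, 1)` equals `[[-4, -1], [1, 0]]`, and both of its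
eigenvalues are real and strictly negative (namely `-2 ± √3`), so the
linearized dynamics is asymptotically stable. -/
theorem dirac_lsgan_jacobian_stable :
    deriv (fun φ => lsganF1 φ 1) 0 = -4 ∧
    deriv (fun θ => lsganF1 0 θ) 1 = -1 ∧
    deriv (fun φ => lsganF2 φ 1) 0 = 1 ∧
    deriv (fun θ => lsganF2 0 θ) 1 = 0 ∧
    (!![(-4 : ℂ), -1; 1, 0]).HasEigval (-2 + Real.sqrt 3) ∧
    (!![(-4 : ℂ), -1; 1, 0]).HasEigval (-2 - Real.sqrt 3) ∧
    (∀ μ : ℂ, (!![(-4 : ℂ), -1; 1, 0]).HasEigval μ → μ.im = 0 ∧ μ.re < 0) := by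
  have s3 : ((Real.sqrt 3 : ℝ) : ℂ) ^ 2 = 3 := by
    norm_cast
    rw [Real.sq_sqrt] <;> norm_num
  have hlt : Real.sqrt 3 < 2 := by
    nlinarith [Real.sq_sqrt (by norm_num : (3:ℝ) ≥ 0), Real.sqrt_nonneg 3]
  have hpos : 0 < Real.sqrt 3 := Real.sqrt_pos.mpr (by norm_num)
  refine ⟨?_, ?_, ?_, ?_, ?_, ?_, ?_⟩
  · simp only [lsganF1]
    rw [show (fun φ => -2 * (φ * 1 - 1/2) * 1 + -2 * (φ * (1:ℝ) + 1/2) * 1)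
        = (fun φ : ℝ => -4 * φ) by funext φ; ring]
    have : HasDerivAt (fun φ : ℝ => -4 * φ) (-4) 0 := by
      simpa using (hasDerivAt_id (0:ℝ)).const_mul (-4)
    exact this.deriv
  · simp only [lsganF1]
    rw [show (fun θ => -2 * ((0:ℝ) * 1 - 1/2) * 1 + -2 * (0 * θ + 1/2) * θ)
        = (fun θ : ℝ => 1 + -1 * θ) by funext θ; ring]
    have : HasDerivAt (fun θ : ℝ => 1 + -1 * θ) (-1) 1 := by
      exact ((hasDerivAt_const (1:ℝ) (1:ℝ)).add ((hasDerivAt_id (1:ℝ)).const_mul (-1))).congr_deriv (by norm_num)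
    exact this.deriv
  · simp only [lsganF2]
    rw [show (fun φ => -2 * (φ * (1:ℝ) - 1/2) * φ)
        = (fun φ : ℝ => -2 * φ ^ 2 + φ) by funext φ; ring]
    have : HasDerivAt (fun φ : ℝ => -2 * φ ^ 2 + φ) 1 0 := by
      exact (((hasDerivAt_pow 2 (0:ℝ)).const_mul (-2)).add (hasDerivAt_id (0:ℝ))).congr_deriv (by norm_num)
    exact this.deriv
  · simp only [lsganF2]
    rw [show (fun θ => -2 * ((0:ℝ) * θ - 1/2) * 0) = (fun _ : ℝ => (0:ℝ)) by
      funext θ; ring]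
    simp
  · apply eig_of_root; push_cast; linear_combination s3
  · apply eig_of_root; push_cast; linear_combination s3
  · rintro μ ⟨v, hv, hmv⟩
    have h0 := congrFun hmv 0
    have h1 := congrFun hmv 1
    simp [Matrix.mulVec, dotProduct, Fin.sum_univ_two] at h0 h1
    -- h0 : -4 * v 0 + -1 * v 1 = μ * v 0, h1 : v 0 = μ * v 1
    have hb : v 1 ≠ 0 := by
      intro hb
      apply hv
      funext i
      fin_cases i
      · simpa [hb] using h1
      · exact hb
    have hroot : μ ^ 2 + 4 * μ + 1 = 0 := by
      have : (μ ^ 2 + 4 * μ + 1) * v 1 = 0 := by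
        linear_combination -h0 - (μ + 4) * h1
      rcases mul_eq_zero.mp this with h | h
      · exact h
      · exact absurd h hb
    have hsq : (μ + 2) ^ 2 = (((Real.sqrt 3 : ℝ) : ℂ)) ^ 2 := by
      rw [s3]; linear_combination hroot
    rcases sq_eq_sq_iff_eq_or_eq_neg.mp hsq with h | h
    · have : μ = -2 + (Real.sqrt 3 : ℝ) := by linear_combination h
      rw [this]
      constructor
      · simp
      · simp; linarith
    · have : μ = -2 - (Real.sqrt 3 : ℝ) := by linear_combination h
      rw [this]
      constructor
      · simp
      · simp; linarith
end

section
/- Let h₁, h₂, h₃ : ℝ → ℝ be differentiable with h₁'(0) > 0, h₂'(0) < 0, h₃'(0) > 0 and |h₁'(0)| = |h₂'(0)| = |h₃'(0)| = a. Then the Jacobian of the Dirac GAN dynamics dφ/dt = h₁'(φc)c + h₂'(φθ)θ, dθ/dt = h₃'(φθ)φ at the equilibrium (φ, θ) = (0, c) with c = 1, assuming additionally h₁, h₂, h₃ are twice differentiable, has the form [[h₁''(0) + h₂''(0), −a], [a, 0]]; its trace is h₁''(0) + h₂''(0) and its determinant is a² > 0. Consequently the linearized dynamic is asymptotically stable if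 h₁''(0) + h₂''(0) < 0 and oscillatory (purely imaginary eigenvalues) if h₁''(0) + h₂''(0) = 0. -/
private lemma diffAt_of_contDiff2 (f : ℝ → ℝ) (hf : ContDiff ℝ 2 f) (x : ℝ) :
    DifferentiableAt ℝ (deriv f) x := by
  have h : ContDiff ℝ (1+1 : WithTop ℕ∞) f := by exact_mod_cast hf
  exact (((contDiff_succ_iff_deriv.mp h).2.2).differentiable one_ne_zero).differentiableAt

private lemma eig_quad (t a : ℝ) (ha : a ≠ 0) (μ : ℂ)
    (h : Matrix.HasEigval !![(t:ℂ), -(a:ℂ); (a:ℂ), 0] μ) :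
    μ^2 - t*μ + a^2 = 0 := by
  obtain ⟨v, hv, hmv⟩ := h
  have h0 := congrFun hmv 0
  have h1 := congrFun hmv 1
  simp [Matrix.mulVec, dotProduct, Fin.sum_univ_two] at h0 h1
  have hv0 : v 0 ≠ 0 := by
    intro h
    apply hv
    have ha' : (a:ℂ) ≠ 0 := by exact_mod_cast ha
    have hv1 : v 1 = 0 := by
      rw [h] at h0
      field_simp at h0
      exact (mul_eq_zero.mp (by linear_combination -h0 : (a:ℂ) * v 1 = 0)).resolve_left ha'
    funext i; fin_cases i <;> simp [h, hv1]
  have key : (μ^2 - t*μ + a^2) * v 0 = 0 := by linear_combination (-μ) * h0 + (a:ℂ) * h1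
  exact (mul_eq_zero.mp key).resolve_right hv0

private lemma stable_case (t a : ℝ) (ht : t < 0) (ha : 0 < a) (μ : ℂ)
    (eq : μ^2 - t*μ + a^2 = 0) : μ.re < 0 := by
  have hre := congrArg Complex.re eq
  have him := congrArg Complex.im eq
  simp [pow_two, Complex.mul_re, Complex.mul_im, Complex.sub_re, Complex.sub_im,
    Complex.add_re, Complex.add_im] at hre him
  set x := μ.re; set y := μ.im
  rcases eq_or_ne y 0 with hy | hy
  · rw [hy] at hre
    nlinarith [sq_nonneg x, sq_nonneg a]
  · have h2 : y * (2*x - t) = 0 := by linear_combination him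
    rcases mul_eq_zero.mp h2 with h | h
    · exact absurd h hy
    · linarith

private lemma osc_case (a : ℝ) (ha : 0 < a) (μ : ℂ)
    (eq : μ^2 - (0:ℝ)*μ + a^2 = 0) : μ.re = 0 ∧ μ.im ≠ 0 := by
  simp only [Complex.ofReal_zero, zero_mul, sub_zero] at eq
  have key : (μ - a*Complex.I)*(μ + a*Complex.I) = 0 := by
    linear_combination eq - (a:ℂ)^2 * Complex.I_sq
  rcases mul_eq_zero.mp key with h | h
  · have h' : μ = a*Complex.I := sub_eq_zero.mp h
    simp [h', ha.ne']
  · have h' : μ = -(a*Complex.I) := by linear_combination h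
    simp [h', ha.ne']


/-- General Dirac GAN with data point `c = 1`: with `h₁'(0) > 0`, `h₂'(0) < 0`,
`h₃'(0) > 0` all of absolute value `a`, the Jacobian of the dynamics
`dφ/dt = h₁'(φ·1)·1 + h₂'(φθ)·θ`, `dθ/dt = h₃'(φθ)·φ` at the equilibrium
`(φ, θ) = (0, 1)` is `[[h₁''(0) + h₂''(0), -a], [a, 0]]`, with trace
`h₁''(0) + h₂''(0)` and determinant `a² > 0`; the linearized dynamic is
asymptotically stable if `h₁''(0) + h₂''(0) < 0` and oscillatory (purely
imaginary eigenvalues) if `h₁''(0) + h₂''(0) = 0`. -/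
theorem dirac_gan_general_jacobian (h₁ h₂ h₃ : ℝ → ℝ) (a : ℝ)
    (hc1 : ContDiff ℝ 2 h₁) (hc2 : ContDiff ℝ 2 h₂) (hc3 : ContDiff ℝ 2 h₃)
    (h1pos : 0 < deriv h₁ 0) (h2neg : deriv h₂ 0 < 0) (h3pos : 0 < deriv h₃ 0)
    (ha1 : |deriv h₁ 0| = a) (ha2 : |deriv h₂ 0| = a) (ha3 : |deriv h₃ 0| = a) :
    -- Jacobian entries at (φ, θ) = (0, 1)
    deriv (fun φ => deriv h₁ (φ * 1) * 1 + deriv h₂ (φ * 1) * 1) 0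
        = deriv (deriv h₁) 0 + deriv (deriv h₂) 0 ∧
    deriv (fun θ => deriv h₁ (0 * 1) * 1 + deriv h₂ (0 * θ) * θ) 1 = -a ∧
    deriv (fun φ => deriv h₃ (φ * 1) * φ) 0 = a ∧
    deriv (fun θ => deriv h₃ (0 * θ) * 0) 1 = 0 ∧
    -- trace and determinant of [[h₁''(0) + h₂''(0), -a], [a, 0]]
    Matrix.trace !![((deriv (deriv h₁) 0 + deriv (deriv h₂) 0 : ℝ) : ℂ), -(a : ℂ);
        (a : ℂ), 0] = ((deriv (deriv h₁) 0 + deriv (deriv h₂) 0 : ℝ) : ℂ) ∧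
    Matrix.det !![((deriv (deriv h₁) 0 + deriv (deriv h₂) 0 : ℝ) : ℂ), -(a : ℂ);
        (a : ℂ), 0] = ((a : ℂ)) ^ 2 ∧
    0 < a ^ 2 ∧
    (deriv (deriv h₁) 0 + deriv (deriv h₂) 0 < 0 →
      ∀ μ : ℂ, (!![((deriv (deriv h₁) 0 + deriv (deriv h₂) 0 : ℝ) : ℂ), -(a : ℂ);
        (a : ℂ), 0]).HasEigval μ → μ.re < 0) ∧
    (deriv (deriv h₁) 0 + deriv (deriv h₂) 0 = 0 →
      ∀ μ : ℂ, (!![((deriv (deriv h₁) 0 + deriv (deriv h₂) 0 : ℝ) : ℂ), -(a : ℂ);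
        (a : ℂ), 0]).HasEigval μ → μ.re = 0 ∧ μ.im ≠ 0) := by
  
  have ha : 0 < a := ha1 ▸ abs_pos.mpr h1pos.ne'
  have hd2 : deriv h₂ 0 = -a := by rw [← ha2, abs_of_neg h2neg]; ring
  have hd3 : deriv h₃ 0 = a := by rw [← ha3, abs_of_pos h3pos]
  refine ⟨?_, ?_, ?_, ?_, ?_, ?_, ?_, ?_, ?_⟩
  · simp only [mul_one]
    exact deriv_fun_add (diffAt_of_contDiff2 h₁ hc1 0) (diffAt_of_contDiff2 h₂ hc2 0)
  · simp only [zero_mul, mul_one]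
    rw [deriv_const_add]
    change deriv (fun θ : ℝ => deriv h₂ 0 * θ) 1 = -a
    rw [deriv_const_mul _ differentiableAt_fun_id]
    simp [hd2]
  · simp only [mul_one]
    rw [deriv_fun_mul (diffAt_of_contDiff2 h₃ hc3 0) differentiableAt_fun_id]
    simp [hd3]
  · simp
  · simp [Matrix.trace_fin_two]
  · simp [Matrix.det_fin_two_of]; ring
  · positivity
  · intro ht μ hμ
    exact stable_case _ a ht ha μ (eig_quad _ a ha.ne' μ hμ)
  · intro ht μ hμ
    rw [ht] at hμ
    exact osc_case a ha μ (eig_quad 0 a ha.ne' μ hμ)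
end
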